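/- Let k ≥ 0 be real and define the dephasing channel E(τ) = ((k+1)²/(2(k²+1))) τ + ((k−1)²/(2(k²+1))) Z τ Z on 2×2 complex matrices. Then for every 2×2 complex matrix ρ: ((k²+1)/(k+1)²) · Σ_{i∈{1,2}} U_i E(U_i† ρ U_i) U_i† = ρ + ((k−1)²/(k+1)²) · ((1/2) X ρ X + (1/2) Y ρ Y), where U₁ = H and U₂ = S·H. -/

import Mathlib

open Matrix Kronecker

noncomputable section

/-- Standard basis ket |0⟩ of a qubit ℂ². -/
def e0 : Fin 2 → ℂ := ![1, 0]

/-- Standard basis ket |1⟩ of a qubit ℂ². -/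
def e1 : Fin 2 → ℂ := ![0, 1]

/-- The standard basis kets, indexed: |j⟩ for j ∈ {0,1}. -/
def eb : Fin 2 → Fin 2 → ℂ := ![e0, e1]

/-- Tensor (Kronecker) product of two one-qubit vectors. -/
def tens (v w : Fin 2 → ℂ) : Fin 2 × Fin 2 → ℂ := fun p => v p.1 * w p.2

/-- The maximally entangled state |Φ⟩ = (1/√2)(|00⟩ + |11⟩). -/
def ketPhi : Fin 2 × Fin 2 → ℂ :=
  ((1 / Real.sqrt 2 : ℝ) : ℂ) • (tens e0 e0 + tens e1 e1)

/-- The non-maximally entangled state |Φ^k⟩ = K(|00⟩ + k|11⟩), K = 1/√(1+k²). -/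
def ketPhiK (k : ℝ) : Fin 2 × Fin 2 → ℂ :=
  ((1 / Real.sqrt (1 + k ^ 2) : ℝ) : ℂ) • (tens e0 e0 + (k : ℂ) • tens e1 e1)

/-- Density operator |v⟩⟨v| of a pure state. -/
def dens {ι : Type*} (v : ι → ℂ) : Matrix ι ι ℂ := vecMulVec v (star v)

/-- Density operator Φ = |Φ⟩⟨Φ|. -/
def PhiD : Matrix (Fin 2 × Fin 2) (Fin 2 × Fin 2) ℂ := dens ketPhi

/-- Density operator Φ^k = |Φ^k⟩⟨Φ^k|. -/
def PhiKD (k : ℝ) : Matrix (Fin 2 × Fin 2) (Fin 2 × Fin 2) ℂ := dens (ketPhiK k)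

/-- The overlap ⟨v| M |v⟩. -/
def ov {ι : Type*} [Fintype ι] (v : ι → ℂ) (M : Matrix ι ι ℂ) : ℂ :=
  star v ⬝ᵥ M.mulVec v

/-- Pauli X. -/
def Xm : Matrix (Fin 2) (Fin 2) ℂ := !![0, 1; 1, 0]

/-- Pauli Y. -/
def Ym : Matrix (Fin 2) (Fin 2) ℂ := !![0, -Complex.I; Complex.I, 0]

/-- Pauli Z. -/
def Zm : Matrix (Fin 2) (Fin 2) ℂ := !![1, 0; 0, -1]

/-- The Paulis I, X, Y, Z indexed by Fin 4. -/
def pauli : Fin 4 → Matrix (Fin 2) (Fin 2) ℂ := ![1, Xm, Ym, Zm]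

/-- The Bell state |Φ^σ⟩ = (σ ⊗ I)|Φ⟩ for σ the i-th Pauli. -/
def bell (i : Fin 4) : Fin 2 × Fin 2 → ℂ :=
  ((pauli i) ⊗ₖ (1 : Matrix (Fin 2) (Fin 2) ℂ)).mulVec ketPhi

/-- The 2×8 matrix ⟨v| ⊗ I₂ acting on ℂ²⊗ℂ²⊗ℂ² (bra on the first two factors). -/
def braI (v : Fin 2 × Fin 2 → ℂ) : Matrix (Fin 2) (Fin 2 × Fin 2 × Fin 2) ℂ :=
  Matrix.of fun i p => star (v (p.1, p.2.1)) * (if i = p.2.2 then 1 else 0)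

/-- Teleportation Kraus operator K_σ = σ · (⟨Φ^σ| ⊗ I₂). -/
def Kmat (σ : Fin 4) : Matrix (Fin 2) (Fin 2 × Fin 2 × Fin 2) ℂ :=
  pauli σ * braI (bell σ)

/-- Teleportation channel with resource state ρ: E_tel^ρ(φ) = Σ_σ K_σ (φ ⊗ ρ) K_σ†. -/
def Etel (ρ : Matrix (Fin 2 × Fin 2) (Fin 2 × Fin 2) ℂ)
    (φ : Matrix (Fin 2) (Fin 2) ℂ) : Matrix (Fin 2) (Fin 2) ℂ :=
  ∑ σ : Fin 4, Kmat σ * (φ ⊗ₖ ρ) * (Kmat σ)ᴴ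

/-- Hadamard gate. -/
def Hm : Matrix (Fin 2) (Fin 2) ℂ := ((1 / Real.sqrt 2 : ℝ) : ℂ) • !![1, 1; 1, -1]

/-- Phase gate S = diag(1, i). -/
def Sm : Matrix (Fin 2) (Fin 2) ℂ := !![1, 0; 0, Complex.I]

section
variable (k : ℝ)
lemma hs2 : ((Real.sqrt 2 : ℝ) : ℂ) * ((Real.sqrt 2 : ℝ) : ℂ) = 2 := by
  norm_cast
  rw [Real.mul_self_sqrt] <;> norm_num

lemma hs2' : (((Real.sqrt 2 : ℝ) : ℂ))⁻¹ * (((Real.sqrt 2 : ℝ) : ℂ))⁻¹ = 2⁻¹ := by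
  rw [← mul_inv]
  norm_num [hs2, hs2'] <;> norm_num

lemma hH1 : Hm * Hmᴴ = 1 := by
  ext i j
  fin_cases i <;> fin_cases j <;>
    simp [Hm, Matrix.mul_apply, Fin.sum_univ_succ, Matrix.one_apply, div_mul_div_comm, hs2, hs2'] <;> norm_num

lemma hHZ : Hm * Zm * Hmᴴ = Xm := by
  ext i j
  fin_cases i <;> fin_cases j <;>
    simp [Hm, Zm, Xm, Matrix.mul_apply, Fin.sum_univ_succ, div_mul_div_comm, hs2, hs2'] <;> norm_num

lemma hSH1 : (Sm * Hm) * (Sm * Hm)ᴴ = 1 := by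
  ext i j
  fin_cases i <;> fin_cases j <;>
    simp [Hm, Sm, Matrix.mul_apply, Fin.sum_univ_succ, Matrix.one_apply, div_mul_div_comm, hs2, hs2',
      Complex.ext_iff] <;> norm_num

lemma hSHZ : (Sm * Hm) * Zm * (Sm * Hm)ᴴ = Ym := by
  ext i j
  fin_cases i <;> fin_cases j <;>
    simp [Hm, Sm, Zm, Ym, Matrix.mul_apply, Fin.sum_univ_succ, div_mul_div_comm, hs2, hs2',
      Complex.ext_iff] <;> norm_num

lemma conjLem (U P ρ : Matrix (Fin 2) (Fin 2) ℂ) (h1 : U * Uᴴ = 1) (h2 : U * Zm * Uᴴ = P)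
    (a b : ℂ) :
    U * (a • (Uᴴ * ρ * U) + b • (Zm * (Uᴴ * ρ * U) * Zm)) * Uᴴ = a • ρ + b • (P * ρ * P) := by
  have e1 : U * (Uᴴ * ρ * U) * Uᴴ = (U * Uᴴ) * ρ * (U * Uᴴ) := by
    simp only [Matrix.mul_assoc]
  have e2 : U * (Zm * (Uᴴ * ρ * U) * Zm) * Uᴴ = (U * Zm * Uᴴ) * ρ * (U * Zm * Uᴴ) := by
    simp only [Matrix.mul_assoc]
  simp [Matrix.mul_add, Matrix.add_mul, Matrix.mul_smul, Matrix.smul_mul, e1, e2, h1, h2]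
end
/-- Conjugating the dephasing channel by U₁ = H, U₂ = S·H and summing. -/
theorem twirled_dephasing (k : ℝ) (hk : 0 ≤ k)
    (E : Matrix (Fin 2) (Fin 2) ℂ → Matrix (Fin 2) (Fin 2) ℂ)
    (hE : ∀ τ, E τ = (((k + 1) ^ 2 / (2 * (k ^ 2 + 1)) : ℝ) : ℂ) • τ
        + (((k - 1) ^ 2 / (2 * (k ^ 2 + 1)) : ℝ) : ℂ) • (Zm * τ * Zm))
    (ρ : Matrix (Fin 2) (Fin 2) ℂ) :
    (((k ^ 2 + 1) / (k + 1) ^ 2 : ℝ) : ℂ) •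
        (Hm * E (Hmᴴ * ρ * Hm) * Hmᴴ
          + (Sm * Hm) * E ((Sm * Hm)ᴴ * ρ * (Sm * Hm)) * (Sm * Hm)ᴴ)
      = ρ + (((k - 1) ^ 2 / (k + 1) ^ 2 : ℝ) : ℂ) •
          ((1 / 2 : ℂ) • (Xm * ρ * Xm) + (1 / 2 : ℂ) • (Ym * ρ * Ym)) := by
  have hk1 : (k + 1 : ℝ) ≠ 0 := by positivity
  have hk2 : (k ^ 2 + 1 : ℝ) ≠ 0 := by positivity
  rw [hE, hE, conjLem Hm Xm ρ hH1 hHZ, conjLem (Sm * Hm) Ym ρ hSH1 hSHZ]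
  have e1 : (((k ^ 2 + 1) / (k + 1) ^ 2 : ℝ) : ℂ) * (((k + 1) ^ 2 / (2 * (k ^ 2 + 1)) : ℝ) : ℂ)
      = 1 / 2 := by
    have : ((k ^ 2 + 1) / (k + 1) ^ 2 * ((k + 1) ^ 2 / (2 * (k ^ 2 + 1))) : ℝ) = 1 / 2 := by
      field_simp
    rw [← Complex.ofReal_mul, this]
    norm_num
  have e2 : (((k ^ 2 + 1) / (k + 1) ^ 2 : ℝ) : ℂ) * (((k - 1) ^ 2 / (2 * (k ^ 2 + 1)) : ℝ) : ℂ)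
      = (((k - 1) ^ 2 / (k + 1) ^ 2 : ℝ) : ℂ) * (1 / 2) := by
    rw [← Complex.ofReal_mul]
    rw [show ((1:ℂ)/2) = ((1/2 : ℝ) : ℂ) by norm_num, ← Complex.ofReal_mul]
    congr 1
    field_simp
  simp only [smul_add, smul_smul, e1, e2]
  module
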